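/- Let α, β, γ, δ be real numbers with αδ - βγ ≠ 0, and suppose the Möbius transformation m(ζ) = (αζ + β)/(γζ + δ) maps the imaginary axis (the set of purely imaginary complex numbers, together with ∞ in the obvious extended sense) into itself. Then αγ = 0 and βδ = 0; consequently either β = γ = 0 or α = δ = 0. -/

import Mathlib

/-- If a Möbius transformation with real coefficients and nonzero determinant maps the
imaginary axis into itself, then `αγ = 0` and `βδ = 0`; hence `β = γ = 0` or `α = δ = 0`. -/
theorem stmt1 (α β γ δ : ℝ) (hdet : α * δ - β * γ ≠ 0)
    (h : ∀ ζ : ℂ, ζ.re = 0 → (γ : ℂ) * ζ + (δ : ℂ) ≠ 0 →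
      ((((α : ℂ) * ζ + (β : ℂ)) / ((γ : ℂ) * ζ + (δ : ℂ))).re = 0)) :
    α * γ = 0 ∧ β * δ = 0 ∧ ((β = 0 ∧ γ = 0) ∨ (α = 0 ∧ δ = 0)) := by
  have key : ∀ t : ℝ, (γ : ℂ) * ((t : ℂ) * Complex.I) + (δ : ℂ) ≠ 0 →
      β * δ + α * γ * t ^ 2 = 0 := by
    intro t hw
    have h0 := h ((t : ℂ) * Complex.I) (by simp) hw
    have hN : Complex.normSq ((γ : ℂ) * ((t : ℂ) * Complex.I) + (δ : ℂ)) ≠ 0 := by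
      simpa [Complex.normSq_eq_zero] using hw
    rw [Complex.div_re] at h0
    simp only [Complex.add_re, Complex.add_im, Complex.mul_re, Complex.mul_im,
      Complex.ofReal_re, Complex.ofReal_im, Complex.I_re, Complex.I_im] at h0
    field_simp at h0
    rcases div_eq_zero_iff.mp h0 with h0 | h0
    · nlinarith [h0, sq_nonneg t]
    · exact absurd (by rw [← mul_assoc]; exact h0) hN
  have hne : ∀ t : ℝ, δ ≠ 0 ∨ γ * t ≠ 0 →
      (γ : ℂ) * ((t : ℂ) * Complex.I) + (δ : ℂ) ≠ 0 := by
    intro t ht hz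
    have hre : δ = 0 := by
      have := congrArg Complex.re hz
      simpa using this
    have him : γ * t = 0 := by
      have := congrArg Complex.im hz
      simpa using this
    tauto
  have hag : α * γ = 0 ∧ β * δ = 0 := by
    by_cases hδ : δ = 0
    · subst hδ
      by_cases hγ : γ = 0
      · simp [hγ]
      · have h1 := key 1 (hne 1 (Or.inr (by simpa using hγ)))
        constructor
        · nlinarith [h1]
        · ring
    · have h0 := key 0 (hne 0 (Or.inl hδ))
      have h1 := key 1 (hne 1 (Or.inl hδ))
      constructor
      · nlinarith [h0, h1]
      · nlinarith [h0]
  obtain ⟨hag1, hbd⟩ := hag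
  refine ⟨hag1, hbd, ?_⟩
  rcases mul_eq_zero.mp hbd with hβ | hδ
  · left
    refine ⟨hβ, ?_⟩
    have hα : α ≠ 0 := by intro hα; apply hdet; rw [hα, hβ]; ring
    rcases mul_eq_zero.mp hag1 with h' | h'
    · exact absurd h' hα
    · exact h'
  · right
    have hβ : β ≠ 0 := by intro hβ; apply hdet; rw [hδ, hβ]; ring
    refine ⟨?_, hδ⟩
    rcases mul_eq_zero.mp hag1 with h' | h'
    · exact h'
    · exfalso
      have hγ : γ ≠ 0 := by intro hγ; apply hdet; rw [hδ, hγ]; ring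
      exact hγ h'
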